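/- Let m ≥ n ≥ 1 be integers. Define the (m+1)×(m+1) diagonal matrix Q with Q_{kk} = 1/((2^{m+1} − 1) · k!) for 0 ≤ k ≤ m, and the vector F ∈ ℝ^{m+1} with F_k = C(m+1, k+1)/(2^{m+1} − 1) for 0 ≤ k ≤ m. Then: Q is positive definite; F_k > 0 for all 0 ≤ k ≤ m; ∑_{k=0}^{m} F_k = 1; for every l with 1 ≤ l ≤ m, ∑_{i+j=2l−1, 0≤i,j≤m} Q_{ij} = 0; and for every l with 0 ≤ l ≤ m, ∑_{i+j=2l, 0≤i,j≤m} Q_{ij} = ∑_{k=l}^{m} ((−1)^{k+l}/l!) · C(k,l) · F_k. In particular (Q, F) is a strictly feasible solution of the semidefinite program (SDP^{m,≤}_n). -/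

import Mathlib

lemma auxA (n l : ℕ) (h : l ≤ n) :
    ∑ k ∈ Finset.Icc l n, (-1:ℤ)^(k+l) * (k.choose l) * (n.choose k)
      = if l = n then 1 else 0 := by
  have hre : Finset.Icc l n = (Finset.range (n - l + 1)).map ⟨fun j => j + l, add_left_injective l⟩ := by
    ext x; simp [Finset.mem_map]; constructor
    · rintro ⟨h1, h2⟩; exact ⟨x - l, by omega, by omega⟩
    · rintro ⟨a, ha, rfl⟩; omega
  rw [hre, Finset.sum_map]
  simp only [Function.Embedding.coeFn_mk]
  have : ∀ j ∈ Finset.range (n - l + 1),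
      (-1:ℤ)^(j + l + l) * ((j+l).choose l) * (n.choose (j+l))
        = (n.choose l : ℤ) * ((-1:ℤ)^j * ((n-l).choose j)) := by
    intro j hj
    simp only [Finset.mem_range] at hj
    have hc := Nat.choose_mul (n := n) (show l ≤ j + l by omega)
    have h2 : n.choose (j+l) * (j+l).choose l = n.choose l * (n-l).choose j := by
      simpa [Nat.add_sub_cancel] using hc
    have h3 : ((-1:ℤ))^(j+l+l) = (-1)^j := by
      rw [show j + l + l = j + 2*l by ring, pow_add]; simp [pow_mul]
    have h2' : ((j+l).choose l : ℤ) * (n.choose (j+l)) = (n.choose l : ℤ) * ((n-l).choose j) := by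
      exact_mod_cast congrArg (Nat.cast : ℕ → ℤ) (by rw [mul_comm]; exact h2)
    rw [h3]
    linear_combination ((-1:ℤ))^j * h2'
  rw [Finset.sum_congr rfl this, ← Finset.mul_sum, Int.alternating_sum_range_choose]
  by_cases hl : l = n
  · simp [hl]
  · rw [if_neg (by omega), if_neg hl, mul_zero]

lemma auxB (l : ℕ) : ∀ m, l ≤ m →
    ∑ k ∈ Finset.Icc l m, (-1:ℤ)^(k+l) * (k.choose l) * ((m+1).choose (k+1)) = 1 := by
  refine Nat.le_induction ?_ ?_
  · rw [Finset.Icc_self, Finset.sum_singleton]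
    simp [Nat.choose_self, show l + l = 2*l by ring, pow_mul]
  · intro m hm ih
    have hsplit : ∀ k ∈ Finset.Icc l (m+1),
        (-1:ℤ)^(k+l) * (k.choose l) * ((m+2).choose (k+1))
          = (-1:ℤ)^(k+l) * (k.choose l) * ((m+1).choose (k+1))
            + (-1:ℤ)^(k+l) * (k.choose l) * ((m+1).choose k) := by
      intro k _
      have : (m+2).choose (k+1) = (m+1).choose k + (m+1).choose (k+1) := Nat.choose_succ_succ _ _
      rw [this]; push_cast; ring
    rw [show m + 1 + 1 = m + 2 by rfl, Finset.sum_congr rfl hsplit, Finset.sum_add_distrib]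
    have h1 : ∑ k ∈ Finset.Icc l (m+1), (-1:ℤ)^(k+l) * (k.choose l) * ((m+1).choose (k+1))
        = ∑ k ∈ Finset.Icc l m, (-1:ℤ)^(k+l) * (k.choose l) * ((m+1).choose (k+1)) := by
      rw [show Finset.Icc l (m+1) = insert (m+1) (Finset.Icc l m) by
        ext x; simp [Finset.mem_insert]; omega]
      rw [Finset.sum_insert (by simp)]
      simp [Nat.choose_succ_self]
    have h2 := auxA (m+1) l (by omega)
    rw [h1, ih, h2, if_neg (by omega), add_zero]

lemma auxC (m l : ℕ) (h : l ≤ m) :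
    ∑ k ∈ Finset.Icc l m, (-1:ℝ)^(k+l) * (k.choose l) * ((m+1).choose (k+1)) = 1 := by
  have := auxB l m h
  have : ((∑ k ∈ Finset.Icc l m, (-1:ℤ)^(k+l) * (k.choose l) * ((m+1).choose (k+1)) : ℤ) : ℝ) = 1 := by
    rw [this]; norm_num
  push_cast at this
  exact this

theorem strictly_feasible_solution_restriction (m n : ℕ) (hn : 1 ≤ n) (hmn : n ≤ m)
    (Q : Matrix (Fin (m + 1)) (Fin (m + 1)) ℝ) (F : ℕ → ℝ)
    (hQ : Q = Matrix.diagonal (fun k : Fin (m + 1) =>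
      1 / (((2 : ℝ) ^ (m + 1) - 1) * (k.val.factorial : ℝ))))
    (hF : ∀ k ≤ m, F k = ((m + 1).choose (k + 1) : ℝ) / ((2 : ℝ) ^ (m + 1) - 1)) :
    Q.PosDef ∧
    (∀ k ≤ m, 0 < F k) ∧
    (∑ k ∈ Finset.range (m + 1), F k) = 1 ∧
    (∀ l, 1 ≤ l → l ≤ m →
      (∑ i : Fin (m + 1), ∑ j : Fin (m + 1),
        if i.val + j.val = 2 * l - 1 then Q i j else 0) = 0) ∧
    (∀ l ≤ m,
      (∑ i : Fin (m + 1), ∑ j : Fin (m + 1),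
        if i.val + j.val = 2 * l then Q i j else 0)
      = ∑ k ∈ Finset.Icc l m,
          ((-1 : ℝ) ^ (k + l) / (l.factorial : ℝ)) * (k.choose l : ℝ) * F k) := by
  have hc : (0:ℝ) < (2:ℝ) ^ (m+1) - 1 := by
    have : (1:ℝ) < 2 ^ (m+1) := one_lt_pow₀ (by norm_num) (by omega)
    linarith
  refine ⟨?_, ?_, ?_, ?_, ?_⟩
  · rw [hQ]
    refine Matrix.PosDef.diagonal fun i => ?_
    have : (0:ℝ) < (i.val.factorial : ℝ) := by positivity
    positivity
  · intro k hk
    rw [hF k hk]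
    have : 0 < (m+1).choose (k+1) := Nat.choose_pos (by omega)
    have : (0:ℝ) < ((m+1).choose (k+1) : ℝ) := by exact_mod_cast this
    positivity
  · have hs : ∀ k ∈ Finset.range (m+1), F k = ((m + 1).choose (k + 1) : ℝ) / ((2:ℝ)^(m+1) - 1) :=
      fun k hk => hF k (by simpa [Nat.lt_succ_iff] using hk)
    rw [Finset.sum_congr rfl hs, ← Finset.sum_div]
    have hnat : ∑ k ∈ Finset.range (m+1), ((m+1).choose (k+1) : ℝ)
        = (2:ℝ)^(m+1) - 1 := by
      have h1 : ∑ i ∈ Finset.range (m+2), (m+1).choose i = 2^(m+1) := Nat.sum_range_choose (m+1)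
      have h2 : ∑ i ∈ Finset.range (m+2), (m+1).choose i
          = (∑ k ∈ Finset.range (m+1), (m+1).choose (k+1)) + (m+1).choose 0 :=
        Finset.sum_range_succ' _ _
      have h0 : (m+1).choose 0 = 1 := Nat.choose_zero_right _
      have h3 : (∑ k ∈ Finset.range (m+1), (m+1).choose (k+1)) = 2^(m+1) - 1 := by omega
      have h4 : 1 ≤ 2^(m+1) := Nat.one_le_two_pow
      rw [← Nat.cast_sum, h3, Nat.cast_sub h4]
      push_cast
      ring
    rw [hnat, div_self (ne_of_gt hc)]
  · intro l hl hlm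
    refine Finset.sum_eq_zero fun i _ => Finset.sum_eq_zero fun j _ => ?_
    rcases eq_or_ne i j with rfl | hij
    · rw [if_neg (by omega)]
    · rw [hQ, Matrix.diagonal_apply_ne _ hij]
      split <;> rfl
  · intro l hl
    have hdiag : (∑ i : Fin (m+1), ∑ j : Fin (m+1),
        if i.val + j.val = 2 * l then Q i j else 0)
        = ∑ i : Fin (m+1), if i.val = l then 1 / (((2:ℝ)^(m+1) - 1) * (l.factorial : ℝ)) else 0 := by
      refine Finset.sum_congr rfl fun i _ => ?_
      rw [Finset.sum_eq_single i]
      · by_cases h : i.val = l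
        · rw [if_pos (by omega), if_pos h, hQ, Matrix.diagonal_apply_eq, h]
        · rw [if_neg (by omega), if_neg h]
      · intro j _ hj
        split
        · rw [hQ, Matrix.diagonal_apply_ne _ (Ne.symm hj)]
        · rfl
      · intro h; exact absurd (Finset.mem_univ i) h
    rw [hdiag, Finset.sum_eq_single (⟨l, by omega⟩ : Fin (m+1))]
    · rw [if_pos rfl]
      have hfac : (0:ℝ) < (l.factorial : ℝ) := by positivity
      have hF' : ∀ k ∈ Finset.Icc l m,
          ((-1:ℝ))^(k+l) / (l.factorial : ℝ) * (k.choose l : ℝ) * F k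
            = 1 / (((2:ℝ)^(m+1) - 1) * (l.factorial : ℝ))
              * ((-1:ℝ)^(k+l) * (k.choose l : ℝ) * ((m+1).choose (k+1) : ℝ)) := by
        intro k hk
        simp only [Finset.mem_Icc] at hk
        rw [hF k hk.2]
        field_simp
      rw [Finset.sum_congr rfl hF', ← Finset.mul_sum, auxC m l hl, mul_one]
    · intro i _ hi
      rw [if_neg (fun h => hi (Fin.ext h))]
    · intro h; exact absurd (Finset.mem_univ _) h
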